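/- For every integer k not divisible by 11, tan(3kπ/11) + 4·sin(2kπ/11) = √11 or tan(3kπ/11) + 4·sin(2kπ/11) = −√11. -/

import Mathlib

theorem stmt5 (k : ℤ) (hk : ¬ (11 : ℤ) ∣ k) :
    Real.tan (3*k*Real.pi/11) + 4*Real.sin (2*k*Real.pi/11) = Real.sqrt 11 ∨
    Real.tan (3*k*Real.pi/11) + 4*Real.sin (2*k*Real.pi/11) = -Real.sqrt 11 := by
  set t : ℝ := k * Real.pi / 11 with ht
  set s : ℝ := Real.sin t with hs
  set c : ℝ := Real.cos t with hc
  have hsc : s ^ 2 + c ^ 2 = 1 := Real.sin_sq_add_cos_sq t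
  -- multiple angle formulas
  have e2s : Real.sin (2 * t) = 2 * s * c := Real.sin_two_mul t
  have e2c : Real.cos (2 * t) = 2 * c ^ 2 - 1 := Real.cos_two_mul t
  have e3s : Real.sin (3 * t) = s * (4 * c ^ 2 - 1) := by
    linear_combination Real.sin_three_mul t - 4 * s * hsc
  have e3c : Real.cos (3 * t) = 4 * c ^ 3 - 3 * c := Real.cos_three_mul t
  have e5s : Real.sin (5 * t) = s * (16 * c ^ 4 - 12 * c ^ 2 + 1) := by
    have h : (5 : ℝ) * t = 3 * t + 2 * t := by ring
    rw [h, Real.sin_add, e3s, e2s, e3c, e2c]; ring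
  have e5c : Real.cos (5 * t) = 16 * c ^ 5 - 20 * c ^ 3 + 5 * c := by
    have h : (5 : ℝ) * t = 3 * t + 2 * t := by ring
    rw [h, Real.cos_add, e3s, e2s, e3c, e2c]
    linear_combination (-2 * c * (4 * c ^ 2 - 1)) * hsc
  have e6s : Real.sin (6 * t) = s * (32 * c ^ 5 - 32 * c ^ 3 + 6 * c) := by
    have h : (6 : ℝ) * t = 3 * t + 3 * t := by ring
    rw [h, Real.sin_add, e3s, e3c]; ring
  have e6c : Real.cos (6 * t) = 32 * c ^ 6 - 48 * c ^ 4 + 18 * c ^ 2 - 1 := by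
    have h : (6 : ℝ) * t = 3 * t + 3 * t := by ring
    rw [h, Real.cos_add, e3s, e3c]
    linear_combination (-(4 * c ^ 2 - 1) ^ 2) * hsc
  have e11s : Real.sin (11 * t) = s * (1024 * c ^ 10 - 2304 * c ^ 8 + 1792 * c ^ 6
      - 560 * c ^ 4 + 60 * c ^ 2 - 1) := by
    have h : (11 : ℝ) * t = 5 * t + 6 * t := by ring
    rw [h, Real.sin_add, e5s, e6s, e5c, e6c]; ring
  -- sin(11t) = 0
  have h11 : Real.sin (11 * t) = 0 := by
    have h : (11 : ℝ) * t = k * Real.pi := by rw [ht]; ring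
    rw [h]; exact Real.sin_int_mul_pi k
  -- s ≠ 0
  have hs0 : s ≠ 0 := by
    intro h
    rw [hs, Real.sin_eq_zero_iff] at h
    obtain ⟨n, hn⟩ := h
    have h2 : ((11 * n : ℤ) : ℝ) * Real.pi = ((k : ℤ) : ℝ) * Real.pi := by
      push_cast
      linear_combination 11 * hn
    have h3 : (11 * n : ℤ) = k := by
      exact_mod_cast mul_right_cancel₀ Real.pi_ne_zero h2
    exact hk ⟨n, h3.symm⟩
  have hU : 1024 * c ^ 10 - 2304 * c ^ 8 + 1792 * c ^ 6
      - 560 * c ^ 4 + 60 * c ^ 2 - 1 = 0 := by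
    have := h11
    rw [e11s] at this
    rcases mul_eq_zero.1 this with h | h
    · exact absurd h hs0
    · exact h
  -- cos(3t) ≠ 0
  have hc3 : Real.cos (3 * t) ≠ 0 := by
    intro h
    rw [Real.cos_eq_zero_iff] at h
    obtain ⟨n, hn⟩ := h
    have h2 : ((22 * n + 11 : ℤ) : ℝ) * Real.pi = ((6 * k : ℤ) : ℝ) * Real.pi := by
      push_cast
      rw [ht] at hn
      linear_combination (-22) * hn
    have h3 : (22 * n + 11 : ℤ) = 6 * k := by
      exact_mod_cast mul_right_cancel₀ Real.pi_ne_zero h2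
    omega
  -- key squared identity
  have key : (s * (32 * c ^ 4 - 20 * c ^ 2 - 1)) ^ 2 = 11 * (4 * c ^ 3 - 3 * c) ^ 2 := by
    linear_combination ((32 * c ^ 4 - 20 * c ^ 2 - 1) ^ 2) * hsc - hU
  have harg3 : 3 * (k : ℝ) * Real.pi / 11 = 3 * t := by rw [ht]; ring
  have harg2 : 2 * (k : ℝ) * Real.pi / 11 = 2 * t := by rw [ht]; ring
  rw [harg3, harg2]
  have hf2 : (Real.tan (3 * t) + 4 * Real.sin (2 * t)) ^ 2 = 11 := by
    rw [Real.tan_eq_sin_div_cos, e3s, e2s]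
    have hc3' : Real.cos (3 * t) ≠ 0 := hc3
    rw [e3c] at hc3' ⊢
    have hc0 : c ≠ 0 := fun h => hc3' (by rw [h]; ring)
    have hc43 : 4 * c ^ 2 - 3 ≠ 0 := fun h => hc3' (by linear_combination c * h)
    field_simp
    linear_combination key
  have h11' : (11 : ℝ) = Real.sqrt 11 ^ 2 := by
    rw [Real.sq_sqrt]; norm_num
  rw [h11'] at hf2
  exact sq_eq_sq_iff_eq_or_eq_neg.1 hf2
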